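/- Let k be a field, let T be a group, let n be a natural number, and let χ : Fin n → (T →* kˣ) be a family of homomorphisms from T to the units of k. Let T act on the vector space V = (Fin n → k) by (t • v) i = χ i (t) · v i. Then the set of vectors with nontrivial stabilizer is a finite union of linear subspaces of V; precisely, { v ∈ V : Stab_T(v) ≠ ⊥ } = ⋃_{S} { v ∈ V : v i = 0 for all i ∉ S }, where the union is over those subsets S ⊆ Fin n for which ⨅_{i ∈ S} ker(χ i) is not the trivial subgroup, and each set { v : v i = 0 for all i ∉ S } is a k-linear subspace of V. -/

import Mathlib

/-- The diagonal action of a group `T` on `Fin n → k` through a family of characters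
`χ i : T →* kˣ`, given by `(t • v) i = χ i t * v i`. -/
def diagAction {k : Type*} [Field k] {T : Type*} [Group T] {n : ℕ}
    (χ : Fin n → (T →* kˣ)) : MulAction T (Fin n → k) where
  smul t v := fun i => ((χ i t : kˣ) : k) * v i
  one_smul v := by
    funext i
    show ((χ i 1 : kˣ) : k) * v i = v i
    simp
  mul_smul t s v := by
    funext i
    show ((χ i (t * s) : kˣ) : k) * v i = ((χ i t : kˣ) : k) * (((χ i s : kˣ) : k) * v i)
    simp [mul_assoc]

lemma mem_diag_stabilizer {k : Type*} [Field k] {T : Type*} [Group T] {n : ℕ}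
    (χ : Fin n → (T →* kˣ)) (v : Fin n → k) (t : T) :
    t ∈ @MulAction.stabilizer T (Fin n → k) _ (diagAction χ) v ↔
      ∀ i, v i ≠ 0 → χ i t = 1 := by
  have h : t ∈ @MulAction.stabilizer T (Fin n → k) _ (diagAction χ) v ↔
      (fun i => ((χ i t : kˣ) : k) * v i) = v := Iff.rfl
  rw [h, funext_iff]
  constructor
  · intro h i hi
    have := h i
    have h1 : ((χ i t : kˣ) : k) = 1 :=
      mul_right_cancel₀ hi (by rw [one_mul]; exact this)
    exact Units.ext (by simpa using h1)
  · intro h i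
    by_cases hi : v i = 0
    · simp [hi]
    · rw [h i hi]; simp

/-- For the diagonal action of `T` on `Fin n → k` via characters `χ i`, the locus of
vectors with nontrivial stabilizer is the finite union, over subsets `S ⊆ Fin n` with
`⨅ i ∈ S, ker (χ i) ≠ ⊥`, of the linear subspaces `{v | v i = 0 for i ∉ S}`;
moreover each such set is a `k`-linear subspace. -/
theorem nontrivial_stabilizer_locus_is_union_of_subspaces
    {k : Type*} [Field k] {T : Type*} [Group T] {n : ℕ}
    (χ : Fin n → (T →* kˣ)) :
    ({ v : Fin n → k | @MulAction.stabilizer T (Fin n → k) _ (diagAction χ) v ≠ ⊥ }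
        = ⋃ S ∈ {S : Finset (Fin n) | (⨅ i ∈ S, (χ i).ker) ≠ (⊥ : Subgroup T)},
            { v : Fin n → k | ∀ i ∉ S, v i = 0 }) ∧
    (∀ S : Finset (Fin n), ∃ W : Submodule k (Fin n → k),
        (W : Set (Fin n → k)) = { v : Fin n → k | ∀ i ∉ S, v i = 0 }) := by
  classical
  constructor
  · ext v
    simp only [Set.mem_setOf_eq, Set.mem_iUnion, exists_prop]
    constructor
    · intro hv
      refine ⟨Finset.univ.filter (fun i => v i ≠ 0), ?_, ?_⟩
      · have heq : (⨅ i ∈ Finset.univ.filter (fun i => v i ≠ 0), (χ i).ker)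
            = @MulAction.stabilizer T (Fin n → k) _ (diagAction χ) v := by
          ext t
          rw [mem_diag_stabilizer]
          simp only [Subgroup.mem_iInf, Finset.mem_filter, Finset.mem_univ, true_and,
            MonoidHom.mem_ker]
        rw [heq]; exact hv
      · intro i hi
        simpa using hi
    · rintro ⟨S, hS, hv⟩
      intro hstab
      apply hS
      rw [eq_bot_iff, ← hstab]
      intro t ht
      rw [mem_diag_stabilizer]
      intro i hi
      have hiS : i ∈ S := by
        by_contra h
        exact hi (hv i h)
      have := Subgroup.mem_iInf.mp ht i
      have := Subgroup.mem_iInf.mp this hiS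
      exact this
  · intro S
    refine ⟨Submodule.pi (↑(Sᶜ) : Set (Fin n)) (fun _ => ⊥), ?_⟩
    ext v
    simp only [SetLike.mem_coe, Submodule.mem_pi, Submodule.mem_bot, Set.mem_setOf_eq,
      Finset.coe_compl, Set.mem_compl_iff, Finset.mem_coe]
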